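/- Let α ∈ ℂ be any root of the polynomial X⁵ − 10X⁴ − 481X³ − 4440X² − 16428X − 21904, and let K = ℚ(√−74) be the subfield of ℂ generated over ℚ by i√74. Then the field K(√37, α), obtained from K by adjoining the positive real square root √37 of 37 and α, is an extension of K of degree 10; equivalently, [ℚ(i√2, √37, α) : ℚ] = 20. -/

import Mathlib

open Polynomial IntermediateField

set_option maxHeartbeats 1000000
set_option synthInstance.maxHeartbeats 400000

/-- helper: a monic quadratic form of a polynomial -/
theorem aux_monic_quad_eq {R : Type*} [CommRing R] {q : R[X]} (hm : q.Monic)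
    (h2 : q.natDegree = 2) : q = X^2 + C (q.coeff 1) * X + C (q.coeff 0) := by
  have hc2 : q.coeff 2 = 1 := h2 ▸ hm.coeff_natDegree
  have hle : (q - X^2).natDegree ≤ 1 := by
    rw [natDegree_le_iff_coeff_eq_zero]
    intro m hm1
    rw [coeff_sub, coeff_X_pow]
    by_cases h : m = 2
    · subst h; simp [hc2]
    · rw [if_neg (by omega), coeff_eq_zero_of_natDegree_lt (by omega), sub_zero]
  have key := eq_X_add_C_of_natDegree_le_one hle
  have e1 : (q - X^2).coeff 1 = q.coeff 1 := by simp [coeff_X_pow]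
  have e0 : (q - X^2).coeff 0 = q.coeff 0 := by simp [coeff_X_pow]
  rw [e1, e0] at key
  linear_combination key

theorem aux_F3_irred : Irreducible (X^5 + 2*X^4 + 2*X^3 + 2 : (ZMod 3)[X]) := by
  set p : (ZMod 3)[X] := X^5 + 2*X^4 + 2*X^3 + 2 with hp
  have hm : p.Monic := by unfold p; monicity!
  have h5 : p.natDegree = 5 := by unfold p; compute_degree!
  have hp1 : p ≠ 1 := fun h => by simp [h] at h5
  rw [hm.irreducible_iff_lt_natDegree_lt hp1]
  rintro q hq hdeg hdvd
  rw [h5, Finset.mem_Ioc] at hdeg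
  norm_num at hdeg
  obtain ⟨hdeg1, hdeg2⟩ := hdeg
  rcases (show q.natDegree = 1 ∨ q.natDegree = 2 by omega) with hnd | hnd
  · rw [hq.eq_X_add_C hnd] at hdvd
    set b := q.coeff 0
    rw [show (X + C b : (ZMod 3)[X]) = X - C (-b) by rw [map_neg, sub_neg_eq_add],
      dvd_iff_isRoot] at hdvd
    have : ∀ c : ZMod 3, c^5 + 2*c^4 + 2*c^3 + 2 ≠ 0 := by decide
    apply this (-b)
    simpa [IsRoot, hp] using hdvd
  · rw [aux_monic_quad_eq hq hnd] at hdvd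
    set a := q.coeff 1 with ha
    set b := q.coeff 0 with hb
    set r1 : ZMod 3 := a^4-2*a^3+2*a^2-3*a^2*b+4*a*b+b^2-2*b with hr1
    set r0 : ZMod 3 := 2+a^3*b-2*a^2*b-2*a*b^2+2*a*b+2*b^2 with hr0
    set Q : (ZMod 3)[X] :=
      X^3 + C (2-a)*X^2 + C (2-b-2*a+a^2)*X + C (-a^3+2*a^2+2*a*b-2*a-2*b) with hQ
    have key : p = (X^2 + C a * X + C b) * Q + (C r1 * X + C r0) := by
      rw [hp, hQ, hr1, hr0]
      simp only [map_add, map_sub, map_mul, map_pow, map_neg, map_ofNat, C_1]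
      ring
    have hdvdr : (X^2 + C a * X + C b : (ZMod 3)[X]) ∣ (C r1 * X + C r0) := by
      refine (dvd_add_right ⟨Q, rfl⟩).mp ?_
      rw [← key]; exact hdvd
    have hdr : (X^2 + C a * X + C b : (ZMod 3)[X]).degree = 2 := by
      rw [← aux_monic_quad_eq hq hnd, degree_eq_natDegree hq.ne_zero, hnd]; rfl
    have hrz : (C r1 * X + C r0 : (ZMod 3)[X]) = 0 := by
      refine eq_zero_of_dvd_of_degree_lt hdvdr (lt_of_le_of_lt degree_linear_le ?_)
      rw [hdr]; norm_num
    have h1 : r1 = 0 := by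
      have h := congrArg (fun r => Polynomial.coeff r 1) hrz
      simpa only [coeff_add, coeff_C_mul, coeff_X_one, mul_one, coeff_C,
        if_neg one_ne_zero, add_zero, coeff_zero] using h
    have h0 : r0 = 0 := by
      have h := congrArg (fun r => Polynomial.coeff r 0) hrz
      simpa only [coeff_add, coeff_C_mul, coeff_X_zero, mul_zero, coeff_C_zero,
        zero_add, coeff_zero] using h
    rw [hr1] at h1; rw [hr0] at h0
    have : ∀ a b : ZMod 3, ¬(a^4-2*a^3+2*a^2-3*a^2*b+4*a*b+b^2-2*b = 0 ∧
        2+a^3*b-2*a^2*b-2*a*b^2+2*a*b+2*b^2 = 0) := by decide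
    exact this a b ⟨h1, h0⟩

noncomputable def auxfZ : ℤ[X] := X^5 - 10*X^4 - 481*X^3 - 4440*X^2 - 16428*X - 21904
noncomputable def auxfQ : ℚ[X] := X^5 - 10*X^4 - 481*X^3 - 4440*X^2 - 16428*X - 21904

theorem auxfZ_monic : (auxfZ).Monic := by unfold auxfZ; monicity!
theorem auxfQ_monic : (auxfQ).Monic := by unfold auxfQ; monicity!
theorem auxfQ_natDegree : auxfQ.natDegree = 5 := by unfold auxfQ; compute_degree!

theorem auxfZ_map : auxfZ.map (Int.castRingHom (ZMod 3)) = X^5 + 2*X^4 + 2*X^3 + 2 := by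
  have h3 : (3 : (ZMod 3)[X]) = 0 := by
    have h : ((3:ℕ) : (ZMod 3)[X]) = C ((3:ℕ) : ZMod 3) := (map_natCast C 3).symm
    have h2 : ((3:ℕ) : ZMod 3) = 0 := by decide
    rw [h2, map_zero] at h
    exact_mod_cast h
  unfold auxfZ
  simp only [Polynomial.map_sub, Polynomial.map_mul, Polynomial.map_pow,
    Polynomial.map_ofNat, Polynomial.map_X]
  linear_combination (-4*X^4 - 161*X^3 - 1480*X^2 - 5476*X - 7302 : (ZMod 3)[X]) * h3

theorem auxfZ_irred : Irreducible auxfZ :=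
  auxfZ_monic.irreducible_of_irreducible_map _ _ (auxfZ_map ▸ aux_F3_irred)

theorem auxfQ_eq_map : auxfQ = auxfZ.map (Int.castRingHom ℚ) := by
  unfold auxfQ auxfZ
  simp only [Polynomial.map_sub, Polynomial.map_mul, Polynomial.map_pow,
    Polynomial.map_ofNat, Polynomial.map_X]

theorem auxfQ_irred : Irreducible auxfQ := by
  rw [auxfQ_eq_map]
  exact (IsPrimitive.Int.irreducible_iff_irreducible_map_cast auxfZ_monic.isPrimitive).mp
    auxfZ_irred

/-- generic quadratic adjunction -/
theorem aux_quad_finrank {K : Type*} [Field K] [Algebra K ℂ] (x : ℂ) (c : K)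
    (hx : x^2 = algebraMap K ℂ c) (hc : ∀ b : K, b^2 ≠ c) :
    Module.finrank K K⟮x⟯ = 2 := by
  have irr : Irreducible (X^2 - C c) :=
    X_pow_sub_C_irreducible_of_prime Nat.prime_two hc
  have haev : aeval x (X^2 - C c : K[X]) = 0 := by simp [hx]
  have hint : IsIntegral K x := ⟨X^2 - C c, monic_X_pow_sub_C c two_ne_zero, haev⟩
  have hmin : minpoly K x = X^2 - C c :=
    (minpoly.eq_of_irreducible_of_monic irr haev (monic_X_pow_sub_C c two_ne_zero)).symm
  rw [adjoin.finrank hint, hmin, natDegree_X_pow_sub_C]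

theorem aux_nosq_neg2 : ∀ b : ℚ, b^2 ≠ (-2 : ℚ) := by intro b h; nlinarith [sq_nonneg b]
theorem aux_nosq_neg74 : ∀ b : ℚ, b^2 ≠ (-74 : ℚ) := by intro b h; nlinarith [sq_nonneg b]
theorem aux_nosq_37 : ∀ b : ℚ, b^2 ≠ (37 : ℚ) := by
  intro b h
  have h37 : Irrational (Real.sqrt 37) := by
    simpa using (by norm_num : Nat.Prime 37).irrational_sqrt
  apply h37
  refine ⟨|b|, ?_⟩
  have hb : ((b:ℝ))^2 = 37 := by
    have h2 := congrArg (fun t : ℚ => (t:ℝ)) h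
    push_cast at h2
    exact h2
  rw [show ((37:ℝ)) = ((b:ℝ))^2 from hb.symm, Real.sqrt_sq_eq_abs]
  push_cast
  rfl

/-- the reals as an intermediate field of ℂ over ℚ -/
noncomputable def auxRealIF : IntermediateField ℚ ℂ :=
  ((Complex.ofRealAm.restrictScalars ℚ).range).toIntermediateField (by
    rintro x ⟨r, rfl⟩
    exact ⟨r⁻¹, by simp⟩)

theorem aux_mem_realIF {x : ℂ} (h : x ∈ auxRealIF) : ∃ r : ℝ, (r:ℂ) = x := h

theorem aux_tower_eq {K : Type*} [Field K] [Algebra K ℂ] (E : IntermediateField K ℂ)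
    (T : IntermediateField E ℂ) :
    Module.finrank K (T.restrictScalars K) = Module.finrank K E * Module.finrank E T :=
  (Module.finrank_mul_finrank K E T).symm

theorem aux_finrank_dvd_of_le (A B : IntermediateField ℚ ℂ) (h : A ≤ B) :
    Module.finrank ℚ A ∣ Module.finrank ℚ B := by
  have e : Module.finrank ℚ (extendScalars h) = Module.finrank ℚ B := rfl
  exact ⟨_, (e ▸ Module.finrank_mul_finrank ℚ A (extendScalars h)).symm⟩

/-- For any root `α` of `X⁵ − 10X⁴ − 481X³ − 4440X² − 16428X − 21904` and
`K = ℚ(√−74)`, the field `K(√37, α)` is a degree `10` extension of `K`; equivalently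
`[ℚ(i√2, √37, α) : ℚ] = 20`. -/
theorem hilbert_class_field_of_Q_sqrt_neg74 (α : ℂ)
    (hα : α ^ 5 - 10 * α ^ 4 - 481 * α ^ 3 - 4440 * α ^ 2 - 16428 * α - 21904 = 0) :
    Module.finrank (IntermediateField.adjoin ℚ ({Complex.I * (Real.sqrt 74 : ℂ)} : Set ℂ))
      (IntermediateField.adjoin
        (IntermediateField.adjoin ℚ ({Complex.I * (Real.sqrt 74 : ℂ)} : Set ℂ))
        ({(Real.sqrt 37 : ℂ), α} : Set ℂ)) = 10 ∧
    Module.finrank ℚ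
      (IntermediateField.adjoin ℚ
        ({Complex.I * (Real.sqrt 2 : ℂ), (Real.sqrt 37 : ℂ), α} : Set ℂ)) = 20 := by
  set θ2 : ℂ := Complex.I * (Real.sqrt 2 : ℂ) with hθ2
  set θ74 : ℂ := Complex.I * (Real.sqrt 74 : ℂ) with hθ74
  set s37 : ℂ := (Real.sqrt 37 : ℂ) with hs37
  -- basic root facts
  have aev : aeval α auxfQ = 0 := by
    unfold auxfQ
    simp only [map_sub, map_mul, map_pow, map_ofNat, aeval_X]
    linear_combination hα
  have hintQ : IsIntegral ℚ α := ⟨auxfQ, auxfQ_monic, aev⟩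
  have hminQ : minpoly ℚ α = auxfQ :=
    (minpoly.eq_of_irreducible_of_monic auxfQ_irred aev auxfQ_monic).symm
  have frα : Module.finrank ℚ ℚ⟮α⟯ = 5 := by
    rw [adjoin.finrank hintQ, hminQ, auxfQ_natDegree]
  -- quadratic generators
  have hθ2sq : θ2^2 = algebraMap ℚ ℂ (-2) := by
    rw [hθ2, mul_pow, Complex.I_sq, ← Complex.ofReal_pow, Real.sq_sqrt (by norm_num : (2:ℝ) ≥ 0)]
    norm_num
  have hθ74sq : θ74^2 = algebraMap ℚ ℂ (-74) := by
    rw [hθ74, mul_pow, Complex.I_sq, ← Complex.ofReal_pow,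
      Real.sq_sqrt (by norm_num : (74:ℝ) ≥ 0)]
    norm_num
  have hs37sq : s37^2 = algebraMap ℚ ℂ (37) := by
    rw [hs37, ← Complex.ofReal_pow, Real.sq_sqrt (by norm_num : (37:ℝ) ≥ 0)]
    norm_num
  have frE2 : Module.finrank ℚ ℚ⟮θ2⟯ = 2 := aux_quad_finrank θ2 (-2) hθ2sq aux_nosq_neg2
  have frK74 : Module.finrank ℚ ℚ⟮θ74⟯ = 2 := aux_quad_finrank θ74 (-74) hθ74sq aux_nosq_neg74
  have fr37 : Module.finrank ℚ ℚ⟮s37⟯ = 2 := aux_quad_finrank s37 37 hs37sq aux_nosq_37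
  set E2 : IntermediateField ℚ ℂ := ℚ⟮θ2⟯ with hE2
  -- √37 is not in E2
  have hintθ2 : IsIntegral ℚ θ2 :=
    ⟨X^2 - C (-2), monic_X_pow_sub_C _ two_ne_zero, by simp [hθ2sq]⟩
  haveI : FiniteDimensional ℚ E2 := adjoin.finiteDimensional hintθ2
  have h37E2 : s37 ∉ E2 := by
    intro hmem
    have hle : ℚ⟮s37⟯ ≤ E2 := adjoin_simple_le_iff.mpr hmem
    have heq : ℚ⟮s37⟯ = E2 := eq_of_le_of_finrank_eq hle (by rw [fr37, frE2])
    have hmem2 : θ2 ∈ ℚ⟮s37⟯ := by rw [heq]; exact mem_adjoin_simple_self ℚ θ2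
    have hreal : ℚ⟮s37⟯ ≤ auxRealIF := by
      rw [adjoin_simple_le_iff]
      exact ⟨Real.sqrt 37, rfl⟩
    obtain ⟨r, hr⟩ := aux_mem_realIF (hreal hmem2)
    have him := congrArg Complex.im hr
    simp [hθ2, Complex.mul_im] at him
    have : (0:ℝ) < Real.sqrt 2 := Real.sqrt_pos.mpr (by norm_num)
    linarith
  -- [E2(√37) : E2] = 2
  have h37sqE2 : ∀ b : E2, b^2 ≠ (37 : E2) := by
    intro b hb
    have hbC : ((b:ℂ))^2 = 37 := by
      have h' : ((b^2 : E2) : ℂ) = ((37:E2):ℂ) := congrArg (fun t : E2 => (t:ℂ)) hb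
      rw [show ((37:E2):ℂ) = 37 from by norm_cast] at h'
      push_cast at h'
      exact h'
    have hfac : ((b:ℂ) - s37) * ((b:ℂ) + s37) = 0 := by
      have h37C : s37^2 = (37:ℂ) := by rw [hs37sq]; norm_num
      linear_combination hbC - h37C
    rcases mul_eq_zero.mp hfac with h | h
    · have hbs : (b:ℂ) = s37 := sub_eq_zero.mp h
      exact h37E2 (hbs ▸ b.2)
    · have hbs : s37 = -(b:ℂ) := by linear_combination h
      exact h37E2 (hbs ▸ neg_mem b.2)
  have hs37sqE2 : s37^2 = algebraMap E2 ℂ (37 : E2) := by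
    rw [hs37sq]
    simp [map_ofNat]
  have frF4 : Module.finrank E2 E2⟮s37⟯ = 2 := aux_quad_finrank s37 (37 : E2) hs37sqE2 h37sqE2
  set F4 : IntermediateField E2 ℂ := E2⟮s37⟯ with hF4
  -- minpoly of α over F4
  have aevF4 : aeval α (auxfQ.map (algebraMap ℚ F4)) = 0 := by
    rw [aeval_map_algebraMap]; exact aev
  have hintF4 : IsIntegral F4 α := ⟨auxfQ.map (algebraMap ℚ F4), auxfQ_monic.map _, aevF4⟩
  haveI : FiniteDimensional F4 F4⟮α⟯ := adjoin.finiteDimensional hintF4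
  set n := Module.finrank F4 F4⟮α⟯ with hn
  have hnval : n = (minpoly F4 α).natDegree := adjoin.finrank hintF4
  have hnle : n ≤ 5 := by
    rw [hnval]
    have hdvd := minpoly.dvd F4 α aevF4
    have := natDegree_le_of_dvd hdvd (auxfQ_monic.map (algebraMap ℚ F4)).ne_zero
    rwa [natDegree_map, auxfQ_natDegree] at this
  have hnpos : 0 < n := hn ▸ Module.finrank_pos
  -- tower computations
  set L : IntermediateField ℚ ℂ := IntermediateField.adjoin ℚ {θ2, s37, α} with hL
  have hA2 : (IntermediateField.adjoin F4 {α}).restrictScalars E2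
      = IntermediateField.adjoin E2 {s37, α} := by
    rw [hF4]
    rw [show (E2⟮s37⟯ : IntermediateField E2 ℂ) = IntermediateField.adjoin E2 {s37} from rfl]
    rw [adjoin_adjoin_left]
    congr 1
  have hA1 : (IntermediateField.adjoin E2 {s37, α}).restrictScalars ℚ = L := by
    rw [hE2]
    rw [show (ℚ⟮θ2⟯ : IntermediateField ℚ ℂ) = IntermediateField.adjoin ℚ {θ2} from rfl]
    erw [adjoin_adjoin_left]
    congr 1
  have frL : Module.finrank ℚ L = 4 * n := by
    rw [← hA1]; erw [aux_tower_eq]; rw [frE2, ← hA2]; erw [aux_tower_eq]; rw [frF4]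
    ring
  -- divisibility by 5
  have hQαle : ℚ⟮α⟯ ≤ L := adjoin_simple_le_iff.mpr (subset_adjoin ℚ _ (by simp))
  have hdvd5 : 5 ∣ Module.finrank ℚ L := frα ▸ aux_finrank_dvd_of_le _ _ hQαle
  have hn5 : n = 5 := by
    rw [frL] at hdvd5
    omega
  have frL20 : Module.finrank ℚ L = 20 := by rw [frL, hn5]
  -- part 2 done; now part 1
  set K74 : IntermediateField ℚ ℂ := ℚ⟮θ74⟯ with hK74
  have hB1 : (IntermediateField.adjoin K74 {s37, α}).restrictScalars ℚ
      = IntermediateField.adjoin ℚ {θ74, s37, α} := by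
    rw [hK74]
    rw [show (ℚ⟮θ74⟯ : IntermediateField ℚ ℂ) = IntermediateField.adjoin ℚ {θ74} from rfl]
    erw [adjoin_adjoin_left]
    congr 1
  have hsqrt74 : Real.sqrt 74 = Real.sqrt 2 * Real.sqrt 37 := by
    rw [← Real.sqrt_mul (by norm_num : (0:ℝ) ≤ 2)]
    norm_num
  have hB2 : IntermediateField.adjoin ℚ {θ74, s37, α} = L := by
    apply le_antisymm
    · rw [adjoin_le_iff]
      rintro x (rfl | rfl | rfl)
      · have h1 : θ2 ∈ L := subset_adjoin ℚ _ (by simp)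
        have h2 : s37 ∈ L := subset_adjoin ℚ _ (by simp)
        have : θ74 = θ2 * s37 := by
          rw [hθ74, hθ2, hs37, hsqrt74]
          push_cast
          ring
        rw [this]
        exact mul_mem h1 h2
      · exact subset_adjoin ℚ _ (by simp)
      · exact subset_adjoin ℚ _ (by simp)
    · rw [hL, adjoin_le_iff]
      rintro x (rfl | rfl | rfl)
      · set L' := IntermediateField.adjoin ℚ {θ74, s37, α}
        have h1 : θ74 ∈ L' := subset_adjoin ℚ _ (by simp)
        have h2 : s37 ∈ L' := subset_adjoin ℚ _ (by simp)
        have h37 : ((37:ℚ):ℂ) ∈ L' := L'.algebraMap_mem (37:ℚ)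
        have : θ2 = θ74 * s37 * (((37:ℚ):ℂ))⁻¹ := by
          rw [hθ74, hθ2, hs37, hsqrt74]
          have h37ne : ((37:ℚ):ℂ) ≠ 0 := by norm_num
          field_simp
          have hss : (Real.sqrt 37 : ℂ) * (Real.sqrt 37 : ℂ) = 37 := by
            rw [← Complex.ofReal_mul, Real.mul_self_sqrt (by norm_num : (0:ℝ) ≤ 37)]
            norm_num
          push_cast
          linear_combination (-((Real.sqrt 2 : ℂ))) * hss
        rw [this]
        exact mul_mem (mul_mem h1 h2) (inv_mem h37)
      · exact subset_adjoin ℚ _ (by simp)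
      · exact subset_adjoin ℚ _ (by simp)
  have frM : Module.finrank ℚ ((IntermediateField.adjoin K74 {s37, α}).restrictScalars ℚ) = 20 := by
    rw [hB1, hB2]; exact frL20
  erw [aux_tower_eq] at frM; rw [frK74] at frM
  constructor
  · omega
  · exact frL20
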